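/- Lindley's recursion explicit solution: suppose real numbers W_k (k ∈ ℤ, k ≤ K) satisfy W_k = (W_{k−1} + U_{k−1})^+ for all k, where U_i = ω_i − I_{i+1}, the partial sums satisfy Σ_{i=m}^0 U_i → −∞ as m → −∞, and W_ℓ = 0 for infinitely many ℓ < K. Then W_k = ( sup_{m ≤ k−1} Σ_{i=m}^{k−1} U_i )^+ for all k ≤ K. -/

import Mathlib

private lemma icc_insert_bot {a b : ℤ} (h : a ≤ b) :
    Finset.Icc a b = insert a (Finset.Icc (a + 1) b) := by
  ext x; simp only [Finset.mem_Icc, Finset.mem_insert]; omega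

private lemma icc_insert_top {a b : ℤ} (h : a ≤ b) :
    Finset.Icc a b = insert b (Finset.Icc a (b - 1)) := by
  ext x; simp only [Finset.mem_Icc, Finset.mem_insert]; omega

/-- Explicit solution of Lindley's recursion: if `W_k = (W_{k-1} + U_{k-1})⁺` for `k ≤ K`
with `U_i = ω_i - I_{i+1}`, the partial sums of `U` tend to `-∞`, and `W_ℓ = 0` for
infinitely many `ℓ < K`, then `W_k = (sup_{m ≤ k-1} Σ_{i=m}^{k-1} U_i)⁺` for all `k ≤ K`. -/
theorem lindley_explicit_solution (K : ℤ) (W ω I : ℤ → ℝ)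
    (hω : ∀ i, 0 ≤ ω i) (hI : ∀ i, 0 ≤ I i)
    (hrec : ∀ k : ℤ, k ≤ K → W k = max (W (k - 1) + (ω (k - 1) - I k)) 0)
    (hdiv : Filter.Tendsto (fun m : ℤ => ∑ i ∈ Finset.Icc m 0, (ω i - I (i + 1)))
      Filter.atBot Filter.atBot)
    (hzeros : ∀ M : ℤ, ∃ ℓ : ℤ, ℓ < K ∧ ℓ ≤ M ∧ W ℓ = 0) :
    ∀ k : ℤ, k ≤ K →
      W k = max (sSup {x : ℝ | ∃ m : ℤ, m ≤ k - 1 ∧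
        x = ∑ i ∈ Finset.Icc m (k - 1), (ω i - I (i + 1))}) 0 := by
  set U : ℤ → ℝ := fun i => ω i - I (i + 1) with hU
  set A : ℤ → Set ℝ :=
    fun k => {x : ℝ | ∃ m : ℤ, m ≤ k - 1 ∧ x = ∑ i ∈ Finset.Icc m (k - 1), U i} with hA
  have hrec' : ∀ k : ℤ, k ≤ K → W k = max (W (k - 1) + U (k - 1)) 0 := by
    intro k hk
    have : U (k - 1) = ω (k - 1) - I k := by simp [hU]
    rw [this]; exact hrec k hk
  have hWnn : ∀ k : ℤ, k ≤ K → 0 ≤ W k := by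
    intro k hk; rw [hrec' k hk]; exact le_max_right _ _
  have hmono : ∀ k : ℤ, k ≤ K → W (k - 1) + U (k - 1) ≤ W k := by
    intro k hk; rw [hrec' k hk]; exact le_max_left _ _
  -- downward induction: W (k - n) + ∑_{i=k-n}^{k-1} U i ≤ W k
  have hsum : ∀ n : ℕ, ∀ k : ℤ, k ≤ K →
      W (k - n) + ∑ i ∈ Finset.Icc (k - n) (k - 1), U i ≤ W k := by
    intro n
    induction n with
    | zero =>
      intro k hk
      simp [Finset.Icc_eq_empty_of_lt (by omega : k - 1 < k)]
    | succ n ih =>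
      intro k hk
      have hle : k - ((n : ℤ) + 1) ≤ k - 1 := by omega
      have hsplit : Finset.Icc (k - ((n : ℤ) + 1)) (k - 1)
          = insert (k - ((n : ℤ) + 1)) (Finset.Icc (k - ((n : ℤ) + 1) + 1) (k - 1)) :=
        icc_insert_bot hle
      have hnot : (k - ((n : ℤ) + 1)) ∉ Finset.Icc (k - ((n : ℤ) + 1) + 1) (k - 1) := by
        simp [Finset.mem_Icc]
      have e1 : k - ((n : ℤ) + 1) + 1 = (k - n : ℤ) := by push_cast; ring
      have e2 : (k - n : ℤ) - 1 = k - ((n : ℤ) + 1) := by push_cast; ring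
      have step : W (k - ((n : ℤ) + 1)) + U (k - ((n : ℤ) + 1)) ≤ W (k - n) := by
        have := hmono (k - n) (by omega)
        rwa [e2] at this
      calc W (k - ((n + 1 : ℕ) : ℤ)) + ∑ i ∈ Finset.Icc (k - ((n + 1 : ℕ) : ℤ)) (k - 1), U i
          = W (k - ((n : ℤ) + 1)) + U (k - ((n : ℤ) + 1))
            + ∑ i ∈ Finset.Icc (k - n) (k - 1), U i := by
            push_cast
            rw [hsplit, Finset.sum_insert hnot, e1]; ring
        _ ≤ W (k - n) + ∑ i ∈ Finset.Icc (k - n) (k - 1), U i := by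
            exact add_le_add_left step _
        _ ≤ W k := ih k hk
  -- lower bound: every element of A k is ≤ W k
  have hub : ∀ k : ℤ, k ≤ K → ∀ x ∈ A k, x ≤ W k := by
    intro k hk x hx
    obtain ⟨m, hm, rfl⟩ := hx
    have hn : (k - ((k - m).toNat : ℤ)) = m := by omega
    have := hsum (k - m).toNat k hk
    rw [hn] at this
    have h0 : 0 ≤ W m := hWnn m (by omega)
    linarith
  have hne : ∀ k : ℤ, (A k).Nonempty := by
    intro k
    exact ⟨U (k - 1), ⟨k - 1, le_refl _, by simp⟩⟩
  have hbdd : ∀ k : ℤ, k ≤ K → BddAbove (A k) := by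
    intro k hk; exact ⟨W k, fun x hx => hub k hk x hx⟩
  -- W k ≥ max (sSup (A k)) 0
  have hge : ∀ k : ℤ, k ≤ K → max (sSup (A k)) 0 ≤ W k := by
    intro k hk
    exact max_le (csSup_le (hne k) (hub k hk)) (hWnn k hk)
  -- upward induction from a zero
  have hle : ∀ n : ℕ, ∀ ℓ : ℤ, W ℓ = 0 → ℓ + n ≤ K → W (ℓ + n) ≤ max (sSup (A (ℓ + n))) 0 := by
    intro n
    induction n with
    | zero => intro ℓ h0 _; simp [h0, le_max_right]
    | succ n ih =>
      intro ℓ h0 hK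
      set k : ℤ := ℓ + ((n + 1 : ℕ) : ℤ) with hkdef
      have hkK : k ≤ K := hK
      have hprev : ℓ + (n : ℤ) = k - 1 := by push_cast [hkdef]; ring
      have ihk : W (k - 1) ≤ max (sSup (A (k - 1))) 0 := by
        rw [← hprev]; exact ih ℓ h0 (by omega)
      -- key: max (sSup (A (k-1))) 0 + U (k-1) ≤ sSup (A k)
      have hmemU : U (k - 1) ∈ A k := ⟨k - 1, le_refl _, by simp⟩
      have hUk : U (k - 1) ≤ sSup (A k) := le_csSup (hbdd k hkK) hmemU
      have hshift : sSup (A (k - 1)) + U (k - 1) ≤ sSup (A k) := by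
        rw [← sub_nonneg, ← sub_sub]
        have : sSup (A (k - 1)) ≤ sSup (A k) - U (k - 1) := by
          apply csSup_le (hne (k - 1))
          intro x hx
          obtain ⟨m, hm, rfl⟩ := hx
          have hmem : (∑ i ∈ Finset.Icc m (k - 1 - 1), U i) + U (k - 1) ∈ A k := by
            refine ⟨m, by omega, ?_⟩
            rw [icc_insert_top (by omega : m ≤ k - 1), Finset.sum_insert (by simp [Finset.mem_Icc])]
            ring
          have := le_csSup (hbdd k hkK) hmem
          linarith
        linarith
      have : W k ≤ max (max (sSup (A (k - 1))) 0 + U (k - 1)) 0 := by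
        rw [hrec' k hkK]
        exact max_le_max (add_le_add_left ihk _) (le_refl 0)
      refine this.trans (max_le ?_ (le_max_right _ _))
      rw [← max_add_add_right]
      exact max_le (hshift.trans (le_max_left _ _))
        ((by linarith : (0:ℝ) + U (k - 1) ≤ sSup (A k)).trans (le_max_left _ _))
  intro k hk
  obtain ⟨ℓ, hℓK, hℓk, hℓ0⟩ := hzeros (k - 1)
  have hn : ℓ + ((k - ℓ).toNat : ℤ) = k := by omega
  have h1 := hle (k - ℓ).toNat ℓ hℓ0 (by rw [hn]; exact hk)
  rw [hn] at h1
  exact le_antisymm h1 (hge k hk)
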